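/- Suppose {ν_n} is a sequence of Borel probability measures on [0,1] that converges weakly to ρ = (1/2)(δ₀+δ₁). If there exist ε₀ > 0 and a subsequence {n_j} such that for every j there exists k_j ∈ ℤ with |ν̂_{n_j}(1/2 + k_j)| ≥ ε₀, then some subsequence of {ν_n} is equi-positive. -/

import Mathlib

open MeasureTheory Filter Topology

/-- Fourier transform of a Borel measure on `ℝ`: `μ̂(ξ) = ∫ e^{-2πiξx} dμ(x)`. -/
noncomputable def FT (μ : Measure ℝ) (ξ : ℝ) : ℂ :=
  ∫ x, Complex.exp (-(2 * (Real.pi : ℂ) * Complex.I) * (ξ : ℂ) * (x : ℂ)) ∂μ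

/-- The integral periodic zero set `Z(μ) = {ξ : μ̂(ξ + k) = 0 for all k ∈ ℤ}`. -/
def Zset (μ : Measure ℝ) : Set ℝ := {ξ : ℝ | ∀ k : ℤ, FT μ (ξ + (k : ℝ)) = 0}

/-- `ρ = (1/2)(δ₀ + δ₁)`. -/
noncomputable def rho : Measure ℝ :=
  (2 : ENNReal)⁻¹ • Measure.dirac (0 : ℝ) + (2 : ENNReal)⁻¹ • Measure.dirac (1 : ℝ)

/-- Weak convergence of a sequence of measures, tested against bounded continuous
functions. -/
def WeakLim (s : ℕ → Measure ℝ) (ν₀ : Measure ℝ) : Prop :=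
  ∀ f : BoundedContinuousFunction ℝ ℝ,
    Tendsto (fun n => ∫ x, f x ∂(s n)) atTop (𝓝 (∫ x, f x ∂ν₀))

/- ### Auxiliary lemmas -/

lemma norm_exp_I_sub_one_le (θ : ℝ) : ‖Complex.exp (θ * Complex.I) - 1‖ ≤ |θ| := by
  have h : ‖Complex.exp (θ * Complex.I) - 1‖ = Real.sqrt (2 - 2 * Real.cos θ) := by
    rw [Complex.exp_mul_I]
    have e : Complex.cos θ + Complex.sin θ * Complex.I - 1
        = Complex.ofReal (Real.cos θ - 1) + Complex.ofReal (Real.sin θ) * Complex.I := by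
      push_cast; ring
    rw [e, Complex.norm_def, Complex.normSq_add_mul_I]
    congr 1
    nlinarith [Real.sin_sq_add_cos_sq θ]
  rw [h]
  have h2 : Real.sqrt (2 - 2 * Real.cos θ) = 2 * |Real.sin (θ / 2)| := by
    rw [Real.abs_sin_half, show (2:ℝ) - 2 * Real.cos θ = 4 * ((1 - Real.cos θ)/2) by ring,
      Real.sqrt_mul (by norm_num), show (4:ℝ) = 2^2 by norm_num, Real.sqrt_sq (by norm_num)]
  rw [h2]
  calc 2 * |Real.sin (θ/2)| ≤ 2 * |θ/2| := by
        have := Real.abs_sin_le_abs (x := θ/2); linarith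
    _ = |θ| := by rw [abs_div, abs_two]; ring

lemma norm_exp_I_sub_exp_I_le (a b : ℝ) :
    ‖Complex.exp ((a:ℂ) * Complex.I) - Complex.exp ((b:ℂ) * Complex.I)‖ ≤ |a - b| := by
  have e : Complex.exp ((a:ℂ) * Complex.I) - Complex.exp ((b:ℂ) * Complex.I)
      = Complex.exp ((b:ℂ) * Complex.I) * (Complex.exp (((a - b : ℝ):ℂ) * Complex.I) - 1) := by
    rw [mul_sub, ← Complex.exp_add, mul_one]
    push_cast; ring_nf
  rw [e, norm_mul, Complex.norm_exp_ofReal_mul_I, one_mul]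
  exact norm_exp_I_sub_one_le _

lemma FT_arg (ξ x : ℝ) :
    -(2 * (Real.pi : ℂ) * Complex.I) * (ξ : ℂ) * (x : ℂ)
      = ((-(2 * Real.pi * ξ * x) : ℝ) : ℂ) * Complex.I := by
  push_cast; ring

lemma FT_integrable (μ : Measure ℝ) [IsFiniteMeasure μ] (ξ : ℝ) :
    Integrable (fun x : ℝ => Complex.exp (-(2 * (Real.pi : ℂ) * Complex.I) * (ξ : ℂ) * (x : ℂ))) μ := by
  have hc : Continuous fun x : ℝ =>
      Complex.exp (-(2 * (Real.pi : ℂ) * Complex.I) * (ξ : ℂ) * (x : ℂ)) := by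
    fun_prop
  refine (integrable_const (1:ℝ)).mono' hc.aestronglyMeasurable ?_
  filter_upwards with x
  rw [FT_arg, Complex.norm_exp_ofReal_mul_I]

lemma FT_lip (μ : Measure ℝ) [IsProbabilityMeasure μ] (hs : μ (Set.Icc (0:ℝ) 1)ᶜ = 0)
    (ξ₁ ξ₂ : ℝ) : ‖FT μ ξ₁ - FT μ ξ₂‖ ≤ 2 * Real.pi * |ξ₁ - ξ₂| := by
  have hae : ∀ᵐ x ∂μ, x ∈ Set.Icc (0:ℝ) 1 := by
    refine (MeasureTheory.ae_iff).2 ?_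
    exact hs
  have hsub : FT μ ξ₁ - FT μ ξ₂
      = ∫ x, (Complex.exp (-(2 * (Real.pi : ℂ) * Complex.I) * (ξ₁ : ℂ) * (x : ℂ))
          - Complex.exp (-(2 * (Real.pi : ℂ) * Complex.I) * (ξ₂ : ℂ) * (x : ℂ))) ∂μ :=
    (integral_sub (FT_integrable μ ξ₁) (FT_integrable μ ξ₂)).symm
  rw [hsub]
  have hb := norm_integral_le_of_norm_le_const (μ := μ) (C := 2 * Real.pi * |ξ₁ - ξ₂|)
    (f := fun x : ℝ => Complex.exp (-(2 * (Real.pi : ℂ) * Complex.I) * (ξ₁ : ℂ) * (x : ℂ))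
          - Complex.exp (-(2 * (Real.pi : ℂ) * Complex.I) * (ξ₂ : ℂ) * (x : ℂ))) ?_
  · simpa using hb
  · filter_upwards [hae] with x hx
    rw [FT_arg, FT_arg]
    refine le_trans (norm_exp_I_sub_exp_I_le _ _) ?_
    have h : (-(2 * Real.pi * ξ₁ * x)) - (-(2 * Real.pi * ξ₂ * x))
        = (2 * Real.pi) * ((ξ₂ - ξ₁) * x) := by ring
    rw [h, abs_mul, abs_of_nonneg (by positivity : (0:ℝ) ≤ 2 * Real.pi), abs_mul,
      abs_sub_comm ξ₂ ξ₁]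
    have hx1 : |x| ≤ 1 := abs_le.2 ⟨by linarith [hx.1], hx.2⟩
    have := mul_le_of_le_one_right (abs_nonneg (ξ₁ - ξ₂)) hx1
    nlinarith [Real.pi_pos]

instance rho_prob : IsProbabilityMeasure rho := by
  constructor
  simp [rho, ENNReal.inv_two_add_inv_two]

lemma rho_supp : rho (Set.Icc (0:ℝ) 1)ᶜ = 0 := by
  have h0 : (0:ℝ) ∈ Set.Icc (0:ℝ) 1 := by norm_num
  have h1 : (1:ℝ) ∈ Set.Icc (0:ℝ) 1 := by norm_num
  simp [rho, Measure.dirac_apply, Set.indicator_of_notMem, h0, h1]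

lemma FT_rho (ξ : ℝ) :
    FT rho ξ = (1 + Complex.exp (-(2 * (Real.pi : ℂ) * Complex.I) * (ξ : ℂ))) / 2 := by
  have hc : Continuous fun x : ℝ =>
      Complex.exp (-(2 * (Real.pi : ℂ) * Complex.I) * (ξ : ℂ) * (x : ℂ)) := by fun_prop
  rw [FT, rho, integral_add_measure, integral_smul_measure, integral_smul_measure,
    integral_dirac, integral_dirac]
  · push_cast
    simp only [Complex.ofReal_zero, Complex.ofReal_one, mul_zero, mul_one, Complex.exp_zero]
    rw [ENNReal.toReal_inv]
    norm_num
    ring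
  · haveI : IsFiniteMeasure ((2:ENNReal)⁻¹ • Measure.dirac (0:ℝ)) := by
      constructor; simp
    exact FT_integrable _ ξ
  · haveI : IsFiniteMeasure ((2:ENNReal)⁻¹ • Measure.dirac (1:ℝ)) := by
      constructor; simp
    exact FT_integrable _ ξ

lemma FT_rho_lower (ξ : ℝ) : Real.cos (Real.pi * ξ) ^ 2 ≤ ‖FT rho ξ‖ := by
  have hre : (FT rho ξ).re = Real.cos (Real.pi * ξ) ^ 2 := by
    rw [FT_rho]
    have : -(2 * (Real.pi : ℂ) * Complex.I) * (ξ : ℂ)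
        = ((-(2 * Real.pi * ξ) : ℝ) : ℂ) * Complex.I := by push_cast; ring
    rw [this, show (2:ℂ) = ((2:ℝ):ℂ) by norm_num, Complex.div_ofReal_re, Complex.add_re,
      Complex.one_re, Complex.exp_ofReal_mul_I_re, Real.cos_neg,
      show 2 * Real.pi * ξ = 2 * (Real.pi * ξ) by ring, Real.cos_two_mul]
    ring
  calc Real.cos (Real.pi * ξ) ^ 2 = (FT rho ξ).re := hre.symm
    _ ≤ |(FT rho ξ).re| := le_abs_self _
    _ ≤ ‖FT rho ξ‖ := by exact Complex.abs_re_le_norm _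

lemma cos_integrable (μ : Measure ℝ) [IsFiniteMeasure μ] (ξ : ℝ) :
    Integrable (fun x : ℝ => Real.cos (2 * Real.pi * ξ * x)) μ := by
  refine (integrable_const (1:ℝ)).mono'
    (by continuity : Continuous fun x : ℝ => Real.cos (2 * Real.pi * ξ * x)).aestronglyMeasurable ?_
  filter_upwards with x
  simpa using Real.abs_cos_le_one _

lemma sin_integrable (μ : Measure ℝ) [IsFiniteMeasure μ] (ξ : ℝ) :
    Integrable (fun x : ℝ => Real.sin (2 * Real.pi * ξ * x)) μ := by
  refine (integrable_const (1:ℝ)).mono'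
    (by continuity : Continuous fun x : ℝ => Real.sin (2 * Real.pi * ξ * x)).aestronglyMeasurable ?_
  filter_upwards with x
  simpa using Real.abs_sin_le_one _

lemma FT_decomp (μ : Measure ℝ) [IsFiniteMeasure μ] (ξ : ℝ) :
    FT μ ξ = ((∫ x, Real.cos (2 * Real.pi * ξ * x) ∂μ : ℝ) : ℂ)
      - Complex.I * ((∫ x, Real.sin (2 * Real.pi * ξ * x) ∂μ : ℝ) : ℂ) := by
  rw [FT]
  have h : ∀ x : ℝ, Complex.exp (-(2 * (Real.pi : ℂ) * Complex.I) * (ξ:ℂ) * (x:ℂ))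
      = ((Real.cos (2 * Real.pi * ξ * x) : ℝ) : ℂ)
        - Complex.I * ((Real.sin (2 * Real.pi * ξ * x) : ℝ) : ℂ) := by
    intro x
    rw [show -(2 * (Real.pi : ℂ) * Complex.I) * (ξ:ℂ) * (x:ℂ)
        = ((-(2 * Real.pi * ξ * x) : ℝ) : ℂ) * Complex.I by push_cast; ring,
      Complex.exp_mul_I, ← Complex.ofReal_cos, ← Complex.ofReal_sin,
      Real.cos_neg, Real.sin_neg]
    push_cast
    ring
  simp_rw [h]
  have h1 : Integrable (fun x : ℝ => ((Real.cos (2 * Real.pi * ξ * x) : ℝ) : ℂ)) μ :=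
    (cos_integrable μ ξ).ofReal (𝕜 := ℂ)
  have h2 : Integrable (fun x : ℝ => Complex.I * ((Real.sin (2 * Real.pi * ξ * x) : ℝ) : ℂ)) μ :=
    ((sin_integrable μ ξ).ofReal (𝕜 := ℂ)).const_mul Complex.I
  rw [integral_sub h1 h2, MeasureTheory.integral_const_mul]
  congr 1
  · exact integral_ofReal
  · congr 1
    exact integral_ofReal

lemma FT_tendsto (ν : ℕ → Measure ℝ) (hprob : ∀ n, IsProbabilityMeasure (ν n))
    (hconv : WeakLim ν rho) (ξ : ℝ) :
    Tendsto (fun n => FT (ν n) ξ) atTop (𝓝 (FT rho ξ)) := by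
  set fc : BoundedContinuousFunction ℝ ℝ :=
    BoundedContinuousFunction.ofNormedAddCommGroup (fun x => Real.cos (2 * Real.pi * ξ * x))
      (by continuity) 1 (fun x => by simpa using Real.abs_cos_le_one _) with hfc
  set fs : BoundedContinuousFunction ℝ ℝ :=
    BoundedContinuousFunction.ofNormedAddCommGroup (fun x => Real.sin (2 * Real.pi * ξ * x))
      (by continuity) 1 (fun x => by simpa using Real.abs_sin_le_one _) with hfs
  have hcoec : ∀ x : ℝ, fc x = Real.cos (2 * Real.pi * ξ * x) := fun x => rfl
  have hcoes : ∀ x : ℝ, fs x = Real.sin (2 * Real.pi * ξ * x) := fun x => rfl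
  have hcos := hconv fc
  have hsin := hconv fs
  simp_rw [hcoec] at hcos
  simp_rw [hcoes] at hsin
  have heq : (fun n => FT (ν n) ξ)
      = fun n => ((∫ x, Real.cos (2 * Real.pi * ξ * x) ∂(ν n) : ℝ) : ℂ)
        - Complex.I * ((∫ x, Real.sin (2 * Real.pi * ξ * x) ∂(ν n) : ℝ) : ℂ) := by
    funext n
    haveI := hprob n
    exact FT_decomp _ ξ
  rw [heq, FT_decomp rho ξ]
  exact ((Complex.continuous_ofReal.tendsto _).comp hcos).sub
    (((Complex.continuous_ofReal.tendsto _).comp hsin).const_mul Complex.I)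

lemma far_bound (δ ξ : ℝ) (hδ0 : 0 < δ) (hξ : ξ ∈ Set.Icc (0:ℝ) 1) (h : δ ≤ |ξ - 1/2|) :
    Real.sin (Real.pi * δ) ^ 2 ≤ Real.cos (Real.pi * ξ) ^ 2 := by
  obtain ⟨hξ0, hξ1⟩ := hξ
  have h12 : |ξ - 1/2| ≤ 1/2 := abs_le.2 ⟨by linarith, by linarith⟩
  have hpi := Real.pi_pos
  have hc : Real.cos (Real.pi * ξ) = -Real.sin (Real.pi * (ξ - 1/2)) := by
    rw [show Real.pi * ξ = Real.pi * (ξ - 1/2) + Real.pi / 2 by ring,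
      Real.cos_add_pi_div_two]
  have key : |Real.sin (Real.pi * (ξ - 1/2))| = Real.sin (Real.pi * |ξ - 1/2|) := by
    rcases abs_cases (ξ - 1/2) with ⟨h1, h2⟩ | ⟨h1, h2⟩ <;> rw [h1]
    · exact abs_of_nonneg (Real.sin_nonneg_of_nonneg_of_le_pi (by positivity)
        (by nlinarith))
    · rw [mul_neg, Real.sin_neg]
      exact abs_of_nonpos (Real.sin_nonpos_of_nonpos_of_neg_pi_le (by nlinarith)
        (by nlinarith))
  have hmono : Real.sin (Real.pi * δ) ≤ Real.sin (Real.pi * |ξ - 1/2|) := by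
    apply Real.sin_le_sin_of_le_of_le_pi_div_two (by nlinarith) (by nlinarith)
    nlinarith
  have hδnn : 0 ≤ Real.sin (Real.pi * δ) := by
    apply Real.sin_nonneg_of_nonneg_of_le_pi (by positivity)
    nlinarith [h12, h]
  calc Real.sin (Real.pi * δ) ^ 2 ≤ Real.sin (Real.pi * |ξ - 1/2|) ^ 2 := by
        apply pow_le_pow_left₀ hδnn hmono
    _ = |Real.sin (Real.pi * (ξ - 1/2))| ^ 2 := by rw [key]
    _ = Real.sin (Real.pi * (ξ - 1/2)) ^ 2 := sq_abs _
    _ = Real.cos (Real.pi * ξ) ^ 2 := by rw [hc]; ring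

/-- If probability measures `ν_n` on `[0,1]` converge weakly to `ρ` and along a
subsequence `|ν̂_{n_j}(1/2 + k_j)| ≥ ε₀` for some integers `k_j`, then some
subsequence of `ν_n` is equi-positive. -/
theorem stmt15 (ν : ℕ → Measure ℝ)
    (hprob : ∀ n, IsProbabilityMeasure (ν n))
    (hsupp : ∀ n, ν n (Set.Icc (0 : ℝ) 1)ᶜ = 0)
    (hconv : WeakLim ν rho)
    (hsub : ∃ ε₀ > (0 : ℝ), ∃ n : ℕ → ℕ, StrictMono n ∧
      ∀ j : ℕ, ∃ k : ℤ, ε₀ ≤ ‖FT (ν (n j)) (1/2 + (k : ℝ))‖) :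
    ∃ m : ℕ → ℕ, StrictMono m ∧ ∃ ε > (0 : ℝ), ∀ x ∈ Set.Icc (0 : ℝ) 1, ∀ j : ℕ,
      ∃ k : ℤ, ε ≤ ‖FT (ν (m j)) (x + (k : ℝ))‖ := by
  obtain ⟨ε₀, hε₀, n, hn, hk⟩ := hsub
  have hpi := Real.pi_pos
  set δ : ℝ := min (ε₀ / (8 * Real.pi)) (1/4) with hδdef
  have hδ0 : 0 < δ := lt_min (by positivity) (by norm_num)
  have hδ14 : δ ≤ 1/4 := min_le_right _ _
  have hδε : 2 * Real.pi * δ ≤ ε₀ / 4 := by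
    have h1 : δ ≤ ε₀ / (8 * Real.pi) := min_le_left _ _
    calc 2 * Real.pi * δ ≤ 2 * Real.pi * (ε₀ / (8 * Real.pi)) := by nlinarith
      _ = ε₀ / 4 := by field_simp; ring
  set c : ℝ := Real.sin (Real.pi * δ) ^ 2 with hcdef
  have hc0 : 0 < c := by
    apply pow_pos
    apply Real.sin_pos_of_pos_of_lt_pi (by positivity)
    nlinarith
  have hc1 : c ≤ 1 := by
    have := Real.abs_sin_le_one (Real.pi * δ)
    nlinarith [abs_nonneg (Real.sin (Real.pi * δ)), sq_abs (Real.sin (Real.pi * δ))]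
  obtain ⟨M, hM⟩ := exists_nat_gt (8 * Real.pi / c)
  have hM0 : 0 < M := by
    have : (0:ℝ) < 8 * Real.pi / c := by positivity
    exact_mod_cast Nat.pos_of_ne_zero (fun hz => by simp [hz] at hM; linarith)
  have hMR : (0:ℝ) < M := by exact_mod_cast hM0
  have hMbound : 2 * Real.pi / M ≤ c / 4 := by
    rw [div_le_div_iff₀ hMR (by norm_num)]
    have : 8 * Real.pi < M * c := by
      rw [div_lt_iff₀ hc0] at hM
      linarith
    nlinarith
  have hgrid : ∀ᶠ N in atTop, ∀ i ∈ Finset.range (M+1),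
      ‖FT (ν N) ((i : ℝ) / M) - FT rho ((i : ℝ) / M)‖ < c / 4 := by
    rw [Filter.eventually_all_finset]
    intro i _
    have ht := FT_tendsto ν hprob hconv ((i : ℝ) / M)
    have := Metric.tendsto_nhds.1 ht (c/4) (by positivity)
    filter_upwards [this] with N hN
    rwa [dist_eq_norm] at hN
  obtain ⟨N, hN⟩ := eventually_atTop.1 hgrid
  refine ⟨fun j => n (j + N), hn.comp (fun a b hab => Nat.add_lt_add_right hab N),
    min (ε₀/2) (c/4), lt_min (by linarith) (by linarith), ?_⟩
  intro x hx j
  have hmN : N ≤ n (j + N) := le_trans (Nat.le_add_left N j) hn.le_apply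
  haveI := hprob (n (j + N))
  by_cases hnear : |x - 1/2| < δ
  · obtain ⟨k, hk'⟩ := hk (j + N)
    refine ⟨k, ?_⟩
    have hlip := FT_lip (ν (n (j+N))) (hsupp _) (1/2 + (k:ℝ)) (x + (k:ℝ))
    have habs : |(1/2 + (k:ℝ)) - (x + (k:ℝ))| = |x - 1/2| := by
      rw [show (1/2 + (k:ℝ)) - (x + (k:ℝ)) = -(x - 1/2) by ring, abs_neg]
    rw [habs] at hlip
    have htri := norm_sub_norm_le (FT (ν (n (j+N))) (1/2 + (k:ℝ)))
      (FT (ν (n (j+N))) (x + (k:ℝ)))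
    have h2πx : 2 * Real.pi * |x - 1/2| ≤ ε₀ / 4 := by
      nlinarith [abs_nonneg (x - 1/2)]
    have hmin : min (ε₀/2) (c/4) ≤ ε₀/2 := min_le_left _ _
    linarith
  · push_neg at hnear
    refine ⟨0, ?_⟩
    rw [Int.cast_zero, add_zero]
    obtain ⟨hx0, hx1⟩ := hx
    set i : ℕ := ⌊x * M⌋₊ with hidef
    have hile : (i:ℝ) ≤ x * M := Nat.floor_le (by positivity)
    have hlt : x * M < i + 1 := Nat.lt_floor_add_one _
    have hiM : i ≤ M := by
      have : x * M ≤ (M:ℝ) := by nlinarith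
      calc i = ⌊x * M⌋₊ := rfl
        _ ≤ ⌊(M:ℝ)⌋₊ := Nat.floor_le_floor this
        _ = M := Nat.floor_natCast M
    have e1 : (i:ℝ) / M ≤ x := by rw [div_le_iff₀ hMR]; linarith
    have e2 : x ≤ (i:ℝ) / M + 1 / M := by
      rw [show (i:ℝ)/M + 1/M = ((i:ℝ)+1)/M by ring, le_div_iff₀ hMR]; linarith
    have hdist : |x - (i:ℝ)/M| ≤ 1 / M := by
      rw [abs_le]
      constructor
      · have : (0:ℝ) ≤ 1 / M := by positivity
        linarith
      · linarith
    have lip1 := FT_lip rho rho_supp x ((i:ℝ) / M)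
    have lip2 := FT_lip (ν (n (j+N))) (hsupp _) ((i:ℝ) / M) x
    have hgr := hN (n (j+N)) hmN i (Finset.mem_range.2 (by omega))
    have hrho : c ≤ ‖FT rho x‖ :=
      le_trans (far_bound δ x hδ0 ⟨hx0, hx1⟩ hnear) (FT_rho_lower x)
    have hstep : 2 * Real.pi * |x - (i:ℝ)/M| ≤ c / 4 := by
      calc 2 * Real.pi * |x - (i:ℝ)/M| ≤ 2 * Real.pi * (1/M) := by nlinarith
        _ = 2 * Real.pi / M := by ring
        _ ≤ c / 4 := hMbound
    have hstep2 : |(i:ℝ)/M - x| = |x - (i:ℝ)/M| := abs_sub_comm _ _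
    rw [hstep2] at lip2
    have tri : ‖FT rho x - FT (ν (n (j+N))) x‖
        ≤ ‖FT rho x - FT rho ((i:ℝ)/M)‖
          + ‖FT rho ((i:ℝ)/M) - FT (ν (n (j+N))) ((i:ℝ)/M)‖
          + ‖FT (ν (n (j+N))) ((i:ℝ)/M) - FT (ν (n (j+N))) x‖ := by
      have heq : FT rho x - FT (ν (n (j+N))) x
          = (FT rho x - FT rho ((i:ℝ)/M))
            + (FT rho ((i:ℝ)/M) - FT (ν (n (j+N))) ((i:ℝ)/M))
            + (FT (ν (n (j+N))) ((i:ℝ)/M) - FT (ν (n (j+N))) x) := by ring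
      rw [heq]
      exact norm_add₃_le
    have hgr' : ‖FT rho ((i:ℝ)/M) - FT (ν (n (j+N))) ((i:ℝ)/M)‖ < c/4 := by
      rwa [norm_sub_rev] at hgr
    have hlast := norm_sub_norm_le (FT rho x) (FT (ν (n (j+N))) x)
    have hmin : min (ε₀/2) (c/4) ≤ c/4 := min_le_right _ _
    linarith
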